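/- arXiv:1707.09225 — 12 statements merged into one kernel-verified Lean document; each statement's English description precedes it below -/
import Mathlib

section
/- The minisum approval voting problem has optimal value Σ_{j} min(γ_j, n − γ_j); that is, min over committees x : Fin m → Bool of Σ_{i ∈ Fin n} d_i(x) = Σ_{j} min(γ_j, n − γ_j), and the committee x* defined by x* j = true if and only if γ_j ≥ n − γ_j attains this minimum. -/
/-- Hamming distance of voter `i`'s profile to the committee `x`. -/
def dHam {n m : ℕ} (p : Fin n → Fin m → Bool) (x : Fin m → Bool) (i : Fin n) : ℕ :=
  (Finset.univ.filter fun j => p i j ≠ x j).card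

/-- Total number of approvals of candidate `j`. -/
def gamma {n m : ℕ} (p : Fin n → Fin m → Bool) (j : Fin m) : ℕ :=
  (Finset.univ.filter fun i => p i j = true).card

lemma gamma_le {n m : ℕ} (p : Fin n → Fin m → Bool) (j : Fin m) : gamma p j ≤ n := by
  simpa [gamma] using (Finset.card_filter_le Finset.univ (fun i => p i j = true))

lemma sum_dHam {n m : ℕ} (p : Fin n → Fin m → Bool) (x : Fin m → Bool) :
    ∑ i : Fin n, dHam p x i = ∑ j : Fin m, (if x j then n - gamma p j else gamma p j) := by
  have h : ∑ i : Fin n, dHam p x i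
      = ∑ j : Fin m, (Finset.univ.filter fun i => p i j ≠ x j).card := by
    simp only [dHam, Finset.card_filter]
    exact Finset.sum_comm
  rw [h]
  refine Finset.sum_congr rfl fun j _ => ?_
  cases hx : x j with
  | true =>
    have := Finset.card_filter_add_card_filter_not
      (s := (Finset.univ : Finset (Fin n))) (p := fun i => p i j = true)
    simp only [Finset.card_univ, Fintype.card_fin] at this
    have hg : gamma p j + (Finset.univ.filter fun i => ¬ p i j = true).card = n := this
    simp only [hx, if_true, ne_eq]
    omega
  | false =>
    simp only [hx, if_false, ne_eq, Bool.not_eq_false]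
    rfl

/-- The minisum approval voting problem has optimal value
`Σ_j min(γ_j, n − γ_j)`, and the committee electing `j` iff `γ_j ≥ n − γ_j`
attains this minimum. -/
theorem minisum_optimal_value {n m : ℕ} (p : Fin n → Fin m → Bool) :
    IsLeast {v : ℕ | ∃ x : Fin m → Bool, ∑ i : Fin n, dHam p x i = v}
      (∑ j : Fin m, min (gamma p j) (n - gamma p j)) ∧
    (∑ i : Fin n, dHam p (fun j => decide (n - gamma p j ≤ gamma p j)) i) =
      ∑ j : Fin m, min (gamma p j) (n - gamma p j) := by
  have hopt : (∑ i : Fin n, dHam p (fun j => decide (n - gamma p j ≤ gamma p j)) i) =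
      ∑ j : Fin m, min (gamma p j) (n - gamma p j) := by
    rw [sum_dHam]
    refine Finset.sum_congr rfl fun j _ => ?_
    by_cases h : n - gamma p j ≤ gamma p j <;> simp [h] <;> omega
  refine ⟨⟨⟨_, hopt⟩, ?_⟩, hopt⟩
  rintro v ⟨x, rfl⟩
  rw [sum_dHam]
  refine Finset.sum_le_sum fun j _ => ?_
  cases x j <;> simp
end

section
/- Fix a committee size C ≤ m. Let x* : Fin m → Bool be a committee with card {j | x* j = true} = C such that every elected candidate has at least as many approvals as every non-elected one, i.e., for all j, j' with x* j = true and x* j' = false one has γ_j ≥ γ_{j'}. Then x* minimizes the sum of Hamming distances among all committees of size C: for every x : Fin m → Bool with card {j | x j = true} = C, Σ_{i ∈ Fin n} d_i(x*) ≤ Σ_{i ∈ Fin n} d_i(x). -/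
lemma dham_sum {n m : ℕ} (p : Fin n → Fin m → Bool) (x : Fin m → Bool) :
    ∑ i : Fin n, dHam p x i =
      ∑ j : Fin m, (Finset.univ.filter fun i : Fin n => p i j ≠ x j).card := by
  unfold dHam
  simp only [Finset.card_filter]
  exact Finset.sum_comm

lemma col_card {n m : ℕ} (p : Fin n → Fin m → Bool) (x : Fin m → Bool) (j : Fin m) :
    (Finset.univ.filter fun i : Fin n => p i j ≠ x j).card =
      if x j = true then n - gamma p j else gamma p j := by
  cases hx : x j with
  | false =>
    rw [if_neg (by simp)]
    unfold gamma
    congr 1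
    ext i
    simp
  | true =>
    rw [if_pos rfl]
    have h := Finset.card_filter_add_card_filter_not
      (s := (Finset.univ : Finset (Fin n))) (p := fun i => p i j = true)
    simp only [Finset.card_univ, Fintype.card_fin] at h
    unfold gamma
    have e : (Finset.univ.filter fun i : Fin n => p i j ≠ true) =
        (Finset.univ.filter fun i : Fin n => ¬(p i j = true)) := rfl
    rw [e]
    omega

lemma key_sum {α : Type*} [DecidableEq α] (γ : α → ℕ) (S T : Finset α)
    (hc : S.card = T.card)
    (h : ∀ j ∈ T, ∀ j' ∉ T, γ j' ≤ γ j) :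
    ∑ j ∈ S, γ j ≤ ∑ j ∈ T, γ j := by
  have hcd : (S \ T).card = (T \ S).card := by
    have h1 := Finset.card_sdiff_add_card_inter S T
    have h2 := Finset.card_sdiff_add_card_inter T S
    rw [Finset.inter_comm] at h2
    omega
  have hdiff : ∑ j ∈ S \ T, γ j ≤ ∑ j ∈ T \ S, γ j := by
    rcases (T \ S).eq_empty_or_nonempty with he | hne
    · have : (S \ T) = ∅ := Finset.card_eq_zero.mp (by rw [hcd, he]; simp)
      simp [this, he]
    · obtain ⟨s₀, hs₀, hmin⟩ := Finset.exists_min_image (T \ S) γ hne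
      have hs₀T : s₀ ∈ T := (Finset.mem_sdiff.mp hs₀).1
      calc ∑ j ∈ S \ T, γ j ≤ (S \ T).card • γ s₀ := by
              apply Finset.sum_le_card_nsmul
              intro t ht
              exact h s₀ hs₀T t (Finset.mem_sdiff.mp ht).2
        _ = (T \ S).card • γ s₀ := by rw [hcd]
        _ ≤ ∑ j ∈ T \ S, γ j := Finset.card_nsmul_le_sum _ _ _ hmin
  have e1 := Finset.sum_inter_add_sum_sdiff S T γ
  have e2 := Finset.sum_inter_add_sum_sdiff T S γ
  rw [Finset.inter_comm] at e2
  omega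

lemma sum_id {n m C : ℕ} (p : Fin n → Fin m → Bool) (y : Fin m → Bool)
    (hy : (Finset.univ.filter fun j => y j = true).card = C) :
    ∑ i : Fin n, dHam p y i + 2 * ∑ j ∈ Finset.univ.filter (fun j => y j = true), gamma p j
      = C * n + ∑ j : Fin m, gamma p j := by
  have hγn : ∀ j : Fin m, gamma p j ≤ n := by
    intro j
    calc gamma p j ≤ (Finset.univ : Finset (Fin n)).card := Finset.card_filter_le _ _
      _ = n := by simp
  rw [dham_sum]
  simp only [col_card]
  rw [Finset.sum_ite]
  have hS : ∑ j ∈ Finset.univ.filter (fun j => y j = true), (n - gamma p j)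
      + ∑ j ∈ Finset.univ.filter (fun j => y j = true), gamma p j = C * n := by
    rw [← Finset.sum_add_distrib]
    have : ∀ j ∈ Finset.univ.filter (fun j => y j = true), n - gamma p j + gamma p j = n := by
      intro j _; have := hγn j; omega
    rw [Finset.sum_congr rfl this, Finset.sum_const, hy, smul_eq_mul]
  have hT : ∑ j ∈ Finset.univ.filter (fun j => ¬ y j = true), gamma p j
      + ∑ j ∈ Finset.univ.filter (fun j => y j = true), gamma p j = ∑ j : Fin m, gamma p j := by
    rw [add_comm]
    exact Finset.sum_filter_add_sum_filter_not _ _ _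
  omega

/-- With a fixed committee size `C ≤ m`, a committee `x*` of size `C`
electing only candidates with the most approvals minimizes the sum of Hamming
distances among all committees of size `C`. -/
theorem cardinality_constrained_minisum {n m C : ℕ} (hC : C ≤ m)
    (p : Fin n → Fin m → Bool) (xstar : Fin m → Bool)
    (hcard : (Finset.univ.filter fun j => xstar j = true).card = C)
    (hmaj : ∀ j j' : Fin m, xstar j = true → xstar j' = false →
      gamma p j' ≤ gamma p j) :
    ∀ x : Fin m → Bool, (Finset.univ.filter fun j => x j = true).card = C →
      ∑ i : Fin n, dHam p xstar i ≤ ∑ i : Fin n, dHam p x i := by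
  intro x hx
  have h1 := sum_id p xstar hcard
  have h2 := sum_id p x hx
  have key : ∑ j ∈ Finset.univ.filter (fun j => x j = true), gamma p j
      ≤ ∑ j ∈ Finset.univ.filter (fun j => xstar j = true), gamma p j := by
    apply key_sum _ _ _ (by rw [hx, hcard])
    intro j hj j' hj'
    simp only [Finset.mem_filter, Finset.mem_univ, true_and] at hj hj'
    exact hmaj j j' hj (by simpa using hj')
  omega
end

section
/- Let d : Fin n → ℝ with d i ≥ 0 for all i, and let 1 ≤ k ≤ n. Then max over finsets S ⊆ Fin n with S.card = k of Σ_{i ∈ S} d i = min over t ≥ 0 of ( k·t + Σ_{i ∈ Fin n} max(d i − t, 0) ), and the minimum is attained (for instance at t equal to the k-th largest value of d). Equivalently, the sum of the k largest values of d equals min { k·t + Σ_i v i : t ≥ 0, v : Fin n → ℝ, v i ≥ 0, v i ≥ d i − t for all i }. -/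
lemma exists_threshold {n k : ℕ} (hk1 : 1 ≤ k) (hkn : k ≤ n) (d : Fin n → ℝ)
    (hd : ∀ i, 0 ≤ d i) :
    ∃ (S : Finset (Fin n)) (t : ℝ), S.card = k ∧ 0 ≤ t ∧
      (∀ i ∈ S, t ≤ d i) ∧ (∀ i ∉ S, d i ≤ t) := by
  set σ := Tuple.sort d with hσ
  have hmono : Monotone (d ∘ σ) := Tuple.monotone_sort d
  have hlt : n - k < n := by omega
  set a : Fin n := ⟨n - k, hlt⟩ with ha
  refine ⟨(Finset.Ici a).image σ, d (σ a), ?_, hd _, ?_, ?_⟩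
  · rw [Finset.card_image_of_injective _ σ.injective, Fin.card_Ici]
    simp [ha]; omega
  · intro i hi
    obtain ⟨j, hj, rfl⟩ := Finset.mem_image.mp hi
    exact hmono (Finset.mem_Ici.mp hj)
  · intro i hi
    have : σ (σ.symm i) = i := σ.apply_symm_apply i
    have hlt' : σ.symm i ≤ a := by
      by_contra h
      exact hi (Finset.mem_image.mpr ⟨σ.symm i, Finset.mem_Ici.mpr (le_of_not_ge h), this⟩)
    calc d i = (d ∘ σ) (σ.symm i) := by simp [this]
      _ ≤ (d ∘ σ) a := hmono hlt'

/-- For nonnegative `d` and `1 ≤ k ≤ n`, the sum of the `k` largest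
values of `d` (the max of `Σ_{i ∈ S} d i` over finsets of cardinality `k`)
equals `min_{t ≥ 0} (k·t + Σ_i max(d i − t, 0))`, the minimum being attained;
equivalently it equals
`min {k·t + Σ_i v i : t ≥ 0, v i ≥ 0, v i ≥ d i − t for all i}`. -/
theorem k_sum_dual_representation {n k : ℕ} (hk1 : 1 ≤ k) (hkn : k ≤ n)
    (d : Fin n → ℝ) (hd : ∀ i, 0 ≤ d i) (M : ℝ)
    (hM : IsGreatest {s : ℝ | ∃ S : Finset (Fin n), S.card = k ∧ ∑ i ∈ S, d i = s} M) :
    IsLeast {c : ℝ | ∃ t : ℝ, 0 ≤ t ∧ c = k * t + ∑ i : Fin n, max (d i - t) 0} M ∧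
    IsLeast {c : ℝ | ∃ (t : ℝ) (v : Fin n → ℝ), 0 ≤ t ∧ (∀ i, 0 ≤ v i) ∧
        (∀ i, d i - t ≤ v i) ∧ c = k * t + ∑ i : Fin n, v i} M := by
  -- general lower bound
  have hlb : ∀ (t : ℝ) (v : Fin n → ℝ), 0 ≤ t → (∀ i, 0 ≤ v i) →
      (∀ i, d i - t ≤ v i) → M ≤ k * t + ∑ i : Fin n, v i := by
    intro t v ht hv hdv
    obtain ⟨S₀, hc, hs⟩ := hM.1
    calc M = ∑ i ∈ S₀, d i := hs.symm
      _ ≤ ∑ i ∈ S₀, (t + v i) := Finset.sum_le_sum fun i _ => by linarith [hdv i]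
      _ = k * t + ∑ i ∈ S₀, v i := by
          rw [Finset.sum_add_distrib, Finset.sum_const, hc, nsmul_eq_mul]
      _ ≤ k * t + ∑ i : Fin n, v i := by
          exact add_le_add_right (Finset.sum_le_sum_of_subset_of_nonneg (Finset.subset_univ _)
            fun i _ _ => hv i) _
  -- the attaining point
  obtain ⟨S, t, hc, ht, hSt, hSt'⟩ := exists_threshold hk1 hkn d hd
  have key : (k : ℝ) * t + ∑ i : Fin n, max (d i - t) 0 = ∑ i ∈ S, d i := by
    have : ∑ i : Fin n, max (d i - t) 0 = ∑ i ∈ S, max (d i - t) 0 := by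
      symm
      apply Finset.sum_subset (Finset.subset_univ _)
      intro i _ hi
      simp [max_eq_right, sub_nonpos.mpr (hSt' i hi)]
    rw [this]
    have : ∑ i ∈ S, max (d i - t) 0 = ∑ i ∈ S, (d i - t) :=
      Finset.sum_congr rfl fun i hi => max_eq_left (by linarith [hSt i hi])
    rw [this, Finset.sum_sub_distrib, Finset.sum_const, hc, nsmul_eq_mul]
    ring
  have hSM : ∑ i ∈ S, d i ≤ M := hM.2 ⟨S, hc, rfl⟩
  have hMeq : M = k * t + ∑ i : Fin n, max (d i - t) 0 := by
    have := hlb t (fun i => max (d i - t) 0) ht (fun i => le_max_right _ _)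
      (fun i => le_max_left _ _)
    rw [key] at *
    linarith
  constructor
  · refine ⟨⟨t, ht, hMeq⟩, ?_⟩
    rintro c ⟨t', ht', rfl⟩
    exact hlb t' (fun i => max (d i - t') 0) ht' (fun i => le_max_right _ _)
      (fun i => le_max_left _ _)
  · refine ⟨⟨t, fun i => max (d i - t) 0, ht, fun i => le_max_right _ _,
      fun i => le_max_left _ _, hMeq⟩, ?_⟩
    rintro c ⟨t', v, ht', hv, hdv, rfl⟩
    exact hlb t' v ht' hv hdv
end

section
/- Let d : Fin n → ℝ with d i ≥ 0 for all i, and let 1 ≤ k ≤ n. Then max over finsets S ⊆ Fin n with S.card = k of Σ_{i ∈ S} d i = min { Σ_{i ∈ Fin n} u i + Σ_{h ∈ Fin k} v h : u : Fin n → ℝ, v : Fin k → ℝ, u i ≥ 0, v h ≥ 0, and u i + v h ≥ d i for all i ∈ Fin n and h ∈ Fin k }, and the minimum is attained. -/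
/-- For nonnegative `d` and `1 ≤ k ≤ n`, the sum of the `k` largest
values of `d` (the max of `Σ_{i ∈ S} d i` over finsets of cardinality `k`)
equals `min {Σ_i u i + Σ_{h ∈ Fin k} v h : u, v ≥ 0, u i + v h ≥ d i ∀ i, h}`,
the minimum being attained. -/
theorem k_sum_assignment_dual {n k : ℕ} (hk1 : 1 ≤ k) (hkn : k ≤ n)
    (d : Fin n → ℝ) (hd : ∀ i, 0 ≤ d i) (M : ℝ)
    (hM : IsGreatest {s : ℝ | ∃ S : Finset (Fin n), S.card = k ∧ ∑ i ∈ S, d i = s} M) :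
    IsLeast {c : ℝ | ∃ (u : Fin n → ℝ) (v : Fin k → ℝ), (∀ i, 0 ≤ u i) ∧
        (∀ h, 0 ≤ v h) ∧ (∀ (i : Fin n) (h : Fin k), d i ≤ u i + v h) ∧
        c = ∑ i : Fin n, u i + ∑ h : Fin k, v h} M := by
  obtain ⟨⟨S, hScard, hSsum⟩, hub⟩ := hM
  have hSne : S.Nonempty := Finset.card_pos.mp (by omega)
  obtain ⟨i0, hi0S, hi0min⟩ := S.exists_min_image d hSne
  set t := d i0 with ht
  have ht0 : 0 ≤ t := hd i0
  have herase : ∑ i ∈ S.erase i0, d i = M - t := by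
    have h := Finset.add_sum_erase S d hi0S
    rw [hSsum] at h
    linarith
  have hout : ∀ j, j ∉ S → d j ≤ t := by
    intro j hj
    by_contra hcon
    push_neg at hcon
    have hjS' : j ∉ S.erase i0 := fun hh => hj (Finset.mem_of_mem_erase hh)
    have hcard : (insert j (S.erase i0)).card = k := by
      rw [Finset.card_insert_of_notMem hjS', Finset.card_erase_of_mem hi0S, hScard]
      omega
    have hle : ∑ i ∈ insert j (S.erase i0), d i ≤ M := hub ⟨_, hcard, rfl⟩
    rw [Finset.sum_insert hjS', herase] at hle
    linarith
  constructor
  · refine ⟨fun i => max (d i - t) 0, fun _ => t, fun i => le_max_right _ _,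
      fun _ => ht0, ?_, ?_⟩
    · intro i h
      rcases le_or_gt (d i) t with hle | hlt
      · have := le_max_right (d i - t) 0
        simp only []
        linarith
      · have hm : max (d i - t) 0 = d i - t := max_eq_left (by linarith)
        simp only [hm]
        linarith
    · have hsum : ∑ i : Fin n, max (d i - t) 0 = ∑ i ∈ S, (d i - t) := by
        rw [← Finset.sum_subset (Finset.subset_univ S)]
        · exact Finset.sum_congr rfl fun i hi =>
            max_eq_left (by linarith [hi0min i hi])
        · intro i _ hi
          exact max_eq_right (by linarith [hout i hi])
      rw [hsum, Finset.sum_sub_distrib, hSsum, Finset.sum_const, hScard,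
        Finset.sum_const, Finset.card_univ, Fintype.card_fin]
      simp [nsmul_eq_mul]
  · rintro c ⟨u, v, hu, hv, huv, rfl⟩
    have σ : {x // x ∈ S} ≃ Fin k := S.equivFinOfCardEq hScard
    have hv' : ∑ h : Fin k, v h = ∑ i : {x // x ∈ S}, v (σ i) :=
      (Equiv.sum_comp σ v).symm
    have hd' : ∑ i ∈ S, d i = ∑ i : {x // x ∈ S}, d i.1 :=
      (Finset.sum_attach S d).symm
    have hu' : ∑ i ∈ S, u i = ∑ i : {x // x ∈ S}, u i.1 :=
      (Finset.sum_attach S u).symm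
    have h1 : ∑ i ∈ S, d i ≤ ∑ i ∈ S, u i + ∑ h : Fin k, v h := by
      rw [hv', hd', hu', ← Finset.sum_add_distrib]
      exact Finset.sum_le_sum fun i _ => huv i.1 (σ i)
    have h2 : ∑ i ∈ S, u i ≤ ∑ i : Fin n, u i :=
      Finset.sum_le_sum_of_subset_of_nonneg (Finset.subset_univ S)
        fun i _ _ => hu i
    linarith [hSsum]
end

section
/- Fix 1 ≤ k ≤ n. The mixed-integer program: minimize v over x : Fin m → Bool, z : Fin n → Fin m → ℝ, and v ∈ ℝ subject to z i j ≥ (p i j)·(1 − x j) and z i j ≥ (1 − p i j)·(x j) for all i, j (booleans identified with 0/1 reals), and Σ_{j} Σ_{i ∈ S} z i j ≤ v for every finset S ⊆ Fin n with S.card = k, has optimal value equal to z(k): its infimum over feasible points equals z(k) and is attained. -/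
/-- `D_k(x)`: sum of the `k` largest Hamming distances of the voters to `x`,
i.e. the maximum of `d_S(x)` over finsets `S ⊆ Fin n` with `S.card = k`. -/
def Dk {n m : ℕ} (p : Fin n → Fin m → Bool) (k : ℕ) (x : Fin m → Bool) : ℕ :=
  (Finset.powersetCard k (Finset.univ : Finset (Fin n))).sup
    (fun S => ∑ i ∈ S, dHam p x i)

/-- `z(k)`: the optimal value of the `k`-sum approval voting problem. -/
def zk {n m : ℕ} (p : Fin n → Fin m → Bool) (k : ℕ) : ℕ :=
  (Finset.univ : Finset (Fin m → Bool)).inf' Finset.univ_nonempty (Dk p k)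

/-- Boolean identified with a 0/1 real. -/
def bR (b : Bool) : ℝ := if b then 1 else 0

lemma sum_z_eq {n m : ℕ} (p : Fin n → Fin m → Bool) (x : Fin m → Bool) (S : Finset (Fin n)) :
    ∑ j : Fin m, ∑ i ∈ S, (if p i j ≠ x j then (1:ℝ) else 0) = ∑ i ∈ S, (dHam p x i : ℝ) := by
  rw [Finset.sum_comm]
  refine Finset.sum_congr rfl fun i _ => ?_
  simp only [dHam]
  rw [Finset.card_filter]
  push_cast
  refine Finset.sum_congr rfl fun j _ => ?_
  by_cases h : p i j = x j <;> simp [h]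

/-- The subset-based MIP with disaggregated `z`-variables
(minimize `v` s.t. `z i j ≥ p i j (1 − x j)`, `z i j ≥ (1 − p i j) x j`,
`Σ_j Σ_{i∈S} z i j ≤ v` for all `S` with `|S| = k`) has optimal value `z(k)`,
attained. -/
theorem mip_subset_disaggregated_value {n m k : ℕ} (hk1 : 1 ≤ k) (hkn : k ≤ n)
    (p : Fin n → Fin m → Bool) :
    IsLeast {v : ℝ | ∃ (x : Fin m → Bool) (z : Fin n → Fin m → ℝ),
        (∀ (i : Fin n) (j : Fin m), bR (p i j) * (1 - bR (x j)) ≤ z i j) ∧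
        (∀ (i : Fin n) (j : Fin m), (1 - bR (p i j)) * bR (x j) ≤ z i j) ∧
        (∀ S : Finset (Fin n), S.card = k → ∑ j : Fin m, ∑ i ∈ S, z i j ≤ v)}
      ((zk p k : ℕ) : ℝ) := by
  have hne : (Finset.powersetCard k (Finset.univ : Finset (Fin n))).Nonempty := by
    rw [Finset.powersetCard_nonempty]
    simpa using hkn
  constructor
  · obtain ⟨x, _, hx⟩ := Finset.exists_mem_eq_inf' (Finset.univ_nonempty) (Dk p (k := k) (m := m))
    refine ⟨x, fun i j => if p i j ≠ x j then 1 else 0, ?_, ?_, ?_⟩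
    · intro i j
      rcases Bool.eq_false_or_eq_true (p i j) with h | h <;>
      rcases Bool.eq_false_or_eq_true (x j) with h' | h' <;>
        simp [bR, h, h']
    · intro i j
      rcases Bool.eq_false_or_eq_true (p i j) with h | h <;>
      rcases Bool.eq_false_or_eq_true (x j) with h' | h' <;>
        simp [bR, h, h']
    · intro S hS
      rw [sum_z_eq]
      have h1 : ∑ i ∈ S, dHam p x i ≤ Dk p k x := by
        unfold Dk
        exact Finset.le_sup (f := fun S => ∑ i ∈ S, dHam p x i)
          (by simp [Finset.mem_powersetCard, hS])
      have : Dk p k x = zk p k := hx.symm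
      calc ∑ i ∈ S, (dHam p x i : ℝ) = ((∑ i ∈ S, dHam p x i : ℕ) : ℝ) := by push_cast; ring
        _ ≤ ((zk p k : ℕ) : ℝ) := by exact_mod_cast this ▸ h1
  · rintro v ⟨x, z, h1, h2, h3⟩
    have hzk : zk p k ≤ Dk p k x := Finset.inf'_le _ (Finset.mem_univ x)
    obtain ⟨S, hSmem, hSeq⟩ := Finset.exists_mem_eq_sup _ hne
      (fun S => ∑ i ∈ S, dHam p x i)
    have hScard : S.card = k := (Finset.mem_powersetCard.mp hSmem).2
    have key : ∀ i j, (if p i j ≠ x j then (1:ℝ) else 0) ≤ z i j := by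
      intro i j
      cases hp : p i j <;> cases hx : x j <;>
        first
          | simpa [bR, hp, hx] using h1 i j
          | simpa [bR, hp, hx] using h2 i j
    calc ((zk p k : ℕ) : ℝ) ≤ ((Dk p k x : ℕ) : ℝ) := by exact_mod_cast hzk
      _ = ∑ i ∈ S, (dHam p x i : ℝ) := by
          have hD : Dk p k x = ∑ i ∈ S, dHam p x i := hSeq
          rw [hD]; push_cast; ring
      _ = ∑ j : Fin m, ∑ i ∈ S, (if p i j ≠ x j then (1:ℝ) else 0) := (sum_z_eq p x S).symm
      _ ≤ ∑ j : Fin m, ∑ i ∈ S, z i j := by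
          refine Finset.sum_le_sum fun j _ => Finset.sum_le_sum fun i _ => key i j
      _ ≤ v := h3 S hScard
end

section
/- Fix 1 ≤ k ≤ n. The mixed-integer program: minimize k·t + Σ_{i ∈ Fin n} v i over x : Fin m → Bool, t ∈ ℝ, v : Fin n → ℝ, d : Fin n → ℝ, z : Fin n → Fin m → ℝ subject to v i ≥ d i − t for all i, d i ≥ Σ_{j} z i j for all i, z i j ≥ (x j)·(1 − p i j) + (p i j)·(1 − x j) for all i, j (booleans identified with 0/1 reals), t ≥ 0, and v i ≥ 0 for all i, has optimal value equal to z(k): its infimum over feasible points equals z(k) and is attained. -/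
lemma bR_expr (a b : Bool) :
    bR a * (1 - bR b) + bR b * (1 - bR a) = if b ≠ a then 1 else 0 := by
  cases a <;> cases b <;> norm_num [bR]

lemma sum_indicator {n m : ℕ} (p : Fin n → Fin m → Bool) (x : Fin m → Bool) (i : Fin n) :
    ∑ j : Fin m, (if p i j ≠ x j then (1:ℝ) else 0) = (dHam p x i : ℝ) := by
  rw [dHam, Finset.sum_boole]


/-- The `k`-centrum MIP (minimize `k·t + Σ_i v_i` s.t.
`v_i ≥ d_i − t`, `d_i ≥ Σ_j z_{ij}`, `z_{ij} ≥ x_j(1 − p_{ij}) + p_{ij}(1 − x_j)`,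
`t ≥ 0`, `v_i ≥ 0`) has optimal value `z(k)`, attained. -/
theorem mip_kcentrum_value {n m k : ℕ} (hk1 : 1 ≤ k) (hkn : k ≤ n)
    (p : Fin n → Fin m → Bool) :
    IsLeast {c : ℝ | ∃ (x : Fin m → Bool) (t : ℝ) (v : Fin n → ℝ)
        (d : Fin n → ℝ) (z : Fin n → Fin m → ℝ),
        (∀ i : Fin n, d i - t ≤ v i) ∧
        (∀ i : Fin n, ∑ j : Fin m, z i j ≤ d i) ∧
        (∀ (i : Fin n) (j : Fin m),
          bR (x j) * (1 - bR (p i j)) + bR (p i j) * (1 - bR (x j)) ≤ z i j) ∧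
        0 ≤ t ∧ (∀ i : Fin n, 0 ≤ v i) ∧
        c = k * t + ∑ i : Fin n, v i}
      ((zk p k : ℕ) : ℝ) := by
  have hpow : (Finset.powersetCard k (Finset.univ : Finset (Fin n))).Nonempty := by
    rw [Finset.powersetCard_nonempty]; simpa using hkn
  constructor
  · -- membership
    obtain ⟨x, -, hx⟩ := Finset.exists_mem_eq_inf' (Finset.univ_nonempty) (Dk p k)
    obtain ⟨S, hS, hSval⟩ := Finset.exists_mem_eq_sup _ hpow
      (fun S => ∑ i ∈ S, dHam p x i)
    have hSval' : Dk p k x = ∑ i ∈ S, dHam p x i := hSval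
    have hScard : S.card = k := (Finset.mem_powersetCard.mp hS).2
    have hSne : S.Nonempty := Finset.card_pos.mp (by omega)
    obtain ⟨i₀, hi₀, hmin⟩ := S.exists_min_image (dHam p x) hSne
    set t₀ := dHam p x i₀ with ht₀
    -- every voter outside S has distance ≤ t₀
    have hout : ∀ i ∉ S, dHam p x i ≤ t₀ := by
      intro i hi
      by_contra h
      push_neg at h
      set S' := insert i (S.erase i₀) with hS'
      have hiS' : i ∉ S.erase i₀ := fun hc => hi (Finset.mem_of_mem_erase hc)
      have hcard' : S'.card = k := by
        rw [hS', Finset.card_insert_of_notMem hiS', Finset.card_erase_of_mem hi₀]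
        omega
      have hle : ∑ j ∈ S', dHam p x j ≤ Dk p k x := by
        apply Finset.le_sup (f := fun S => ∑ i ∈ S, dHam p x i)
        rw [Finset.mem_powersetCard]
        exact ⟨Finset.subset_univ _, hcard'⟩
      have hsum' : ∑ j ∈ S', dHam p x j = dHam p x i + ∑ j ∈ S.erase i₀, dHam p x j :=
        Finset.sum_insert hiS'
      have hsumS : ∑ j ∈ S.erase i₀, dHam p x j + dHam p x i₀ = ∑ j ∈ S, dHam p x j :=
        Finset.sum_erase_add S _ hi₀
      rw [hSval'] at hle
      omega
    refine ⟨x, (t₀ : ℝ), fun i => if i ∈ S then (dHam p x i : ℝ) - t₀ else 0,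
      fun i => (dHam p x i : ℝ), fun i j => if p i j ≠ x j then 1 else 0,
      ?_, ?_, ?_, by positivity, ?_, ?_⟩
    · intro i
      by_cases hi : i ∈ S
      · simp [hi]
      · simp only [hi, if_false]
        have := hout i hi
        have : (dHam p x i : ℝ) ≤ (t₀ : ℝ) := by exact_mod_cast this
        linarith
    · intro i; rw [sum_indicator]
    · intro i j; rw [bR_expr]
    · intro i
      by_cases hi : i ∈ S
      · have := hmin i hi
        simp only [hi, if_true, sub_nonneg]
        exact_mod_cast this
      · simp [hi]
    · -- value equality
      have hsplit : ∑ i : Fin n, (if i ∈ S then (dHam p x i : ℝ) - t₀ else 0)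
          = ∑ i ∈ S, ((dHam p x i : ℝ) - t₀) := by
        rw [Finset.sum_ite_mem, Finset.univ_inter]
      rw [hsplit, Finset.sum_sub_distrib, Finset.sum_const, hScard, nsmul_eq_mul]
      have : ((zk p k : ℕ) : ℝ) = ((∑ i ∈ S, dHam p x i : ℕ) : ℝ) := by
        rw [zk, hx, hSval']
      rw [this]
      push_cast
      ring
  · -- lower bound
    rintro c ⟨x, t, v, d, z, h1, h2, h3, ht, hv, rfl⟩
    have hd : ∀ i, (dHam p x i : ℝ) ≤ d i := by
      intro i
      calc (dHam p x i : ℝ) = ∑ j : Fin m, (if p i j ≠ x j then (1:ℝ) else 0) :=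
            (sum_indicator p x i).symm
        _ ≤ ∑ j : Fin m, z i j := by
            apply Finset.sum_le_sum
            intro j _
            rw [← bR_expr]
            exact h3 i j
        _ ≤ d i := h2 i
    obtain ⟨S, hS, hSval⟩ := Finset.exists_mem_eq_sup _ hpow
      (fun S => ∑ i ∈ S, dHam p x i)
    have hSval' : Dk p k x = ∑ i ∈ S, dHam p x i := hSval
    have hScard : S.card = k := (Finset.mem_powersetCard.mp hS).2
    have h1' : ∀ i, (dHam p x i : ℝ) - t ≤ v i := fun i =>
      le_trans (by linarith [hd i]) (h1 i)
    have key : ((Dk p k x : ℕ) : ℝ) ≤ k * t + ∑ i : Fin n, v i := by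
      have : ((Dk p k x : ℕ) : ℝ) = ∑ i ∈ S, (dHam p x i : ℝ) := by
        rw [hSval']; push_cast; ring
      rw [this]
      have hle1 : ∑ i ∈ S, (dHam p x i : ℝ) ≤ ∑ i ∈ S, (v i + t) := by
        apply Finset.sum_le_sum
        intro i _
        linarith [h1' i]
      have hle2 : ∑ i ∈ S, v i ≤ ∑ i : Fin n, v i :=
        Finset.sum_le_sum_of_subset_of_nonneg (Finset.subset_univ S)
          (fun i _ _ => hv i)
      rw [Finset.sum_add_distrib, Finset.sum_const, hScard, nsmul_eq_mul] at hle1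
      linarith
    have hzk : (zk p k : ℝ) ≤ ((Dk p k x : ℕ) : ℝ) := by
      exact_mod_cast Finset.inf'_le (Dk p k) (Finset.mem_univ x)
    linarith
end

section
/- Fix 1 ≤ k ≤ n. The mixed-integer program: minimize Σ_{i ∈ Fin n} u i + Σ_{h ∈ Fin k} v h over x : Fin m → Bool, u : Fin n → ℝ, v : Fin k → ℝ, d : Fin n → ℝ, z : Fin n → Fin m → ℝ subject to u i + v h ≥ d i for all i ∈ Fin n and h ∈ Fin k, d i ≥ Σ_{j} z i j for all i, z i j ≥ (x j)·(1 − p i j) + (p i j)·(1 − x j) for all i, j (booleans identified with 0/1 reals), u i ≥ 0 for all i, and v h ≥ 0 for all h, has optimal value equal to z(k): its infimum over feasible points equals z(k) and is attained. -/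
lemma zsum {n m : ℕ} (p : Fin n → Fin m → Bool) (x : Fin m → Bool) (i : Fin n) :
    ∑ j : Fin m, (bR (x j) * (1 - bR (p i j)) + bR (p i j) * (1 - bR (x j)))
      = (dHam p x i : ℝ) := by
  rw [dHam, Finset.card_filter]
  push_cast
  refine Finset.sum_congr rfl fun j _ => ?_
  cases hp : p i j <;> cases hx : x j <;> simp [bR, hp, hx]

/-- The assignment-dual MIP (minimize `Σ_i u_i + Σ_{h∈Fin k} v_h`
s.t. `u_i + v_h ≥ d_i`, `d_i ≥ Σ_j z_{ij}`,
`z_{ij} ≥ x_j(1 − p_{ij}) + p_{ij}(1 − x_j)`, `u ≥ 0`, `v ≥ 0`) has optimal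
value `z(k)`, attained. -/
theorem mip_assignment_dual_value {n m k : ℕ} (hk1 : 1 ≤ k) (hkn : k ≤ n)
    (p : Fin n → Fin m → Bool) :
    IsLeast {c : ℝ | ∃ (x : Fin m → Bool) (u : Fin n → ℝ) (v : Fin k → ℝ)
        (d : Fin n → ℝ) (z : Fin n → Fin m → ℝ),
        (∀ (i : Fin n) (h : Fin k), d i ≤ u i + v h) ∧
        (∀ i : Fin n, ∑ j : Fin m, z i j ≤ d i) ∧
        (∀ (i : Fin n) (j : Fin m),
          bR (x j) * (1 - bR (p i j)) + bR (p i j) * (1 - bR (x j)) ≤ z i j) ∧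
        (∀ i : Fin n, 0 ≤ u i) ∧ (∀ h : Fin k, 0 ≤ v h) ∧
        c = ∑ i : Fin n, u i + ∑ h : Fin k, v h}
      ((zk p k : ℕ) : ℝ) := by
  have hne : (Finset.powersetCard k (Finset.univ : Finset (Fin n))).Nonempty :=
    Finset.powersetCard_nonempty.mpr (by simpa using hkn)
  constructor
  · -- membership
    obtain ⟨x, -, hx⟩ := Finset.exists_mem_eq_inf'
      (Finset.univ_nonempty (α := Fin m → Bool)) (Dk p k)
    obtain ⟨S, hSmem, hSsup⟩ := Finset.exists_mem_eq_sup _ hne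
      (fun S => ∑ i ∈ S, dHam p x i)
    have hScard : S.card = k := (Finset.mem_powersetCard.mp hSmem).2
    have hSne : S.Nonempty := Finset.card_pos.mp (by omega)
    have hswap : ∀ i ∈ S, ∀ j, j ∉ S → dHam p x j ≤ dHam p x i := by
      intro i hi j hj
      by_contra hlt
      push_neg at hlt
      have hj' : j ∉ S.erase i := fun h => hj (Finset.mem_of_mem_erase h)
      have hcard : (insert j (S.erase i)).card = k := by
        rw [Finset.card_insert_of_notMem hj', Finset.card_erase_of_mem hi]
        omega
      have hmem : insert j (S.erase i) ∈ Finset.powersetCard k (Finset.univ : Finset (Fin n)) :=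
        Finset.mem_powersetCard.mpr ⟨Finset.subset_univ _, hcard⟩
      have hle := Finset.le_sup (f := fun T => ∑ i ∈ T, dHam p x i) hmem
      simp only [hSsup] at hle
      rw [Finset.sum_insert hj'] at hle
      have heq : dHam p x i + ∑ a ∈ S.erase i, dHam p x a = ∑ a ∈ S, dHam p x a :=
        Finset.add_sum_erase S (dHam p x) hi
      omega
    set t : ℕ := S.inf' hSne (dHam p x) with ht
    have htle : ∀ i ∈ S, t ≤ dHam p x i := fun i hi => Finset.inf'_le (dHam p x) hi
    have hout : ∀ j, j ∉ S → dHam p x j ≤ t := by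
      intro j hj
      exact Finset.le_inf' hSne (dHam p x) fun b hb => hswap b hb j hj
    refine ⟨x, fun i => if i ∈ S then ((dHam p x i : ℝ) - t) else 0, fun _ => (t : ℝ),
      fun i => (dHam p x i : ℝ),
      fun i j => bR (x j) * (1 - bR (p i j)) + bR (p i j) * (1 - bR (x j)),
      ?_, ?_, ?_, ?_, ?_, ?_⟩
    · intro i h
      by_cases hi : i ∈ S
      · simp [hi]
      · simp only [hi, if_false, zero_add]
        exact_mod_cast hout i hi
    · intro i; exact le_of_eq (zsum p x i)
    · intro i j; exact le_refl _
    · intro i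
      by_cases hi : i ∈ S
      · simp only [hi, if_true, sub_nonneg]
        exact_mod_cast htle i hi
      · simp [hi]
    · intro h; positivity
    · have h1 : ∑ i : Fin n, (if i ∈ S then ((dHam p x i : ℝ) - t) else 0)
          = ∑ i ∈ S, ((dHam p x i : ℝ) - t) := by
        rw [Finset.sum_ite_mem, Finset.univ_inter]
      have h2 : ∑ _h : Fin k, (t : ℝ) = (k : ℝ) * t := by
        simp [mul_comm]
      rw [h1, h2, Finset.sum_sub_distrib, Finset.sum_const, hScard, nsmul_eq_mul]
      have : zk p k = ∑ i ∈ S, dHam p x i := by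
        rw [zk, hx, Dk, hSsup]
      rw [this]
      push_cast
      ring
  · -- lower bound
    rintro c ⟨x, u, v, d, z, h1, h2, h3, hu, hv, hc⟩
    have hd : ∀ i, (dHam p x i : ℝ) ≤ d i := by
      intro i
      calc (dHam p x i : ℝ)
          = ∑ j : Fin m, (bR (x j) * (1 - bR (p i j)) + bR (p i j) * (1 - bR (x j))) :=
            (zsum p x i).symm
        _ ≤ ∑ j : Fin m, z i j := Finset.sum_le_sum fun j _ => h3 i j
        _ ≤ d i := h2 i
    have hSbound : ∀ S ∈ Finset.powersetCard k (Finset.univ : Finset (Fin n)),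
        ((∑ i ∈ S, dHam p x i : ℕ) : ℝ) ≤ c := by
      intro S hS
      have hScard : S.card = k := (Finset.mem_powersetCard.mp hS).2
      let e : S ≃ Fin k := S.equivFinOfCardEq hScard
      push_cast
      calc ∑ i ∈ S, (dHam p x i : ℝ)
          ≤ ∑ i ∈ S, d i := Finset.sum_le_sum fun i _ => hd i
        _ = ∑ i : S, d i := (Finset.sum_coe_sort S d).symm
        _ ≤ ∑ i : S, (u i + v (e i)) := Finset.sum_le_sum fun i _ => h1 i (e i)
        _ = ∑ i : S, u i + ∑ i : S, v (e i) := Finset.sum_add_distrib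
        _ = ∑ i ∈ S, u i + ∑ h : Fin k, v h := by
            rw [Finset.sum_coe_sort S u, Equiv.sum_comp e v]
        _ ≤ ∑ i : Fin n, u i + ∑ h : Fin k, v h := by
            exact add_le_add_left (Finset.sum_le_sum_of_subset_of_nonneg
              (Finset.subset_univ S) (fun i _ _ => hu i)) _
        _ = c := hc.symm
    obtain ⟨S, hSm, hSe⟩ := Finset.exists_mem_eq_sup _ hne
      (fun S => ∑ i ∈ S, dHam p x i)
    have hDk : ((Dk p k x : ℕ) : ℝ) ≤ c := by
      rw [Dk, hSe]; exact hSbound S hSm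
    have hz : zk p k ≤ Dk p k x := Finset.inf'_le _ (Finset.mem_univ x)
    calc ((zk p k : ℕ) : ℝ) ≤ ((Dk p k x : ℕ) : ℝ) := by exact_mod_cast hz
      _ ≤ c := hDk
end

section
/- Fix 1 ≤ k ≤ n. Suppose x : Fin m → ℝ, v ∈ ℝ, and z : Fin n → Fin m → ℝ satisfy z i j ≥ (p i j)·(1 − x j) and z i j ≥ (1 − p i j)·(x j) for all i, j (booleans identified with 0/1 reals), and Σ_{j} Σ_{i ∈ S} z i j ≤ v for every finset S ⊆ Fin n with S.card = k. Then for every finset S ⊆ Fin n with S.card = k, Σ_{j} (k − γ_j(S))·(x j) + Σ_{j} γ_j(S)·(1 − x j) ≤ v. (In particular, the projection onto (x, v) of the feasible region of the continuous relaxation of the subset-based formulation with z-variables is contained in the feasible region of the continuous relaxation of the aggregated subset-based formulation, so the latter is at least as strong.) -/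
/-- Number of approvals of candidate `j` among the voters in `S`. -/
def gammaS {n m : ℕ} (p : Fin n → Fin m → Bool) (S : Finset (Fin n)) (j : Fin m) : ℕ :=
  (S.filter fun i => p i j = true).card

/-- Any point `(x, z, v)` feasible for the continuous relaxation of
the disaggregated subset-based formulation projects onto a point `(x, v)` feasible
for the continuous relaxation of the aggregated formulation: for every finset `S`
with `|S| = k`, `Σ_j (k − γ_j(S)) x_j + Σ_j γ_j(S)(1 − x_j) ≤ v`. -/
theorem projection_feasibility {n m k : ℕ} (hk1 : 1 ≤ k) (hkn : k ≤ n)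
    (p : Fin n → Fin m → Bool) (x : Fin m → ℝ) (v : ℝ) (z : Fin n → Fin m → ℝ)
    (h1 : ∀ (i : Fin n) (j : Fin m), bR (p i j) * (1 - x j) ≤ z i j)
    (h2 : ∀ (i : Fin n) (j : Fin m), (1 - bR (p i j)) * x j ≤ z i j)
    (h3 : ∀ S : Finset (Fin n), S.card = k → ∑ j : Fin m, ∑ i ∈ S, z i j ≤ v) :
    ∀ S : Finset (Fin n), S.card = k →
      ∑ j : Fin m, ((k : ℝ) - (gammaS p S j : ℝ)) * x j +
        ∑ j : Fin m, (gammaS p S j : ℝ) * (1 - x j) ≤ v := by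
  intro S hS
  refine le_trans ?_ (h3 S hS)
  rw [← Finset.sum_add_distrib]
  apply Finset.sum_le_sum
  intro j _
  have hsplit := Finset.sum_filter_add_sum_filter_not S (fun i => p i j = true) (fun i => z i j)
  have hcard : ((S.filter fun i => ¬ p i j = true).card : ℝ) = (k : ℝ) - (gammaS p S j : ℝ) := by
    have := Finset.card_filter_add_card_filter_not (s := S) (p := fun i => p i j = true)
    have h' : gammaS p S j + (S.filter fun i => ¬ p i j = true).card = k := by
      simpa [gammaS, hS] using this
    have : ((S.filter fun i => ¬ p i j = true).card : ℕ) = k - gammaS p S j := by omega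
    rw [this]
    have hle : gammaS p S j ≤ k := by omega
    push_cast [hle]
    ring
  calc ((k : ℝ) - (gammaS p S j : ℝ)) * x j + (gammaS p S j : ℝ) * (1 - x j)
      ≤ (∑ i ∈ S.filter fun i => ¬ p i j = true, z i j)
        + (∑ i ∈ S.filter fun i => p i j = true, z i j) := by
        apply add_le_add
        · rw [← hcard]
          have : ((S.filter fun i => ¬ p i j = true).card : ℝ) * x j
              = ∑ i ∈ S.filter fun i => ¬ p i j = true, x j := by
            rw [Finset.sum_const, nsmul_eq_mul]
          rw [this]
          apply Finset.sum_le_sum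
          intro i hi
          have hpi : p i j = false := by
            have := Finset.mem_filter.mp hi
            simpa using this.2
          have := h2 i j
          simpa [bR, hpi] using this
        · have : ((gammaS p S j : ℝ)) * (1 - x j)
              = ∑ i ∈ S.filter fun i => p i j = true, (1 - x j) := by
            rw [Finset.sum_const, nsmul_eq_mul]; rfl
          rw [this]
          apply Finset.sum_le_sum
          intro i hi
          have hpi : p i j = true := (Finset.mem_filter.mp hi).2
          have := h1 i j
          simpa [bR, hpi] using this
    _ = ∑ i ∈ S, z i j := by rw [add_comm]; exact hsplit
end

section
/- Fix 1 ≤ k ≤ n and a fractional vector x : Fin m → ℝ with 0 ≤ x j ≤ 1 for all j, and set D(x) = max over finsets S ⊆ Fin n with S.card = k of Σ_{i ∈ S} Σ_{j} |p i j − x j| (booleans identified with 0/1 reals). Then the continuous relaxations of the three formulations, with x fixed, all have optimal value D(x): (i) inf { v : ∃ z : Fin n → Fin m → ℝ with z i j ≥ (p i j)(1 − x j), z i j ≥ (1 − p i j)(x j) for all i,j, and Σ_j Σ_{i ∈ S} z i j ≤ v for all S with S.card = k } = D(x); (ii) inf { k·t + Σ_i v i : t ≥ 0, v i ≥ 0,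 and ∃ z, d with z i j ≥ (x j)(1 − p i j) + (p i j)(1 − x j), d i ≥ Σ_j z i j, v i ≥ d i − t } = D(x); (iii) inf { Σ_i u i + Σ_{h ∈ Fin k} v h : u i ≥ 0, v h ≥ 0, and ∃ z, d with z i j ≥ (x j)(1 − p i j) + (p i j)(1 − x j), d i ≥ Σ_j z i j, u i + v h ≥ d i for all i, h } = D(x). Hence the three formulations produce the same LP bound. -/
lemma bR_abs {x : ℝ} (hx : 0 ≤ x ∧ x ≤ 1) (b : Bool) :
    |bR b - x| = x * (1 - bR b) + bR b * (1 - x) := by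
  cases b <;> simp [bR]
  exacts [hx.1, hx.2]

lemma bR_abs1 (x : ℝ) (b : Bool) :
    bR b * (1 - x) ≤ |bR b - x| := by
  cases b <;> simp [bR] <;> linarith [le_abs_self (1 - x)]

lemma bR_abs2 (x : ℝ) (b : Bool) :
    (1 - bR b) * x ≤ |bR b - x| := by
  cases b <;> simp [bR] <;> linarith [le_abs_self x, neg_abs_le x, le_abs_self (1-x)]

/-- For a fixed fractional `x ∈ [0,1]^m`, with
`D(x) = max_{|S|=k} Σ_{i∈S} Σ_j |p i j − x j|`, the continuous relaxations of
the three formulations (with `x` fixed) all have optimal value `D(x)`. -/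
theorem lp_bounds_coincide {n m k : ℕ} (hk1 : 1 ≤ k) (hkn : k ≤ n)
    (p : Fin n → Fin m → Bool) (x : Fin m → ℝ) (hx : ∀ j, 0 ≤ x j ∧ x j ≤ 1)
    (D : ℝ)
    (hD : IsGreatest {s : ℝ | ∃ S : Finset (Fin n), S.card = k ∧
        ∑ i ∈ S, ∑ j : Fin m, |bR (p i j) - x j| = s} D) :
    IsLeast {v : ℝ | ∃ z : Fin n → Fin m → ℝ,
        (∀ (i : Fin n) (j : Fin m), bR (p i j) * (1 - x j) ≤ z i j) ∧
        (∀ (i : Fin n) (j : Fin m), (1 - bR (p i j)) * x j ≤ z i j) ∧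
        (∀ S : Finset (Fin n), S.card = k → ∑ j : Fin m, ∑ i ∈ S, z i j ≤ v)} D ∧
    IsLeast {c : ℝ | ∃ (t : ℝ) (v : Fin n → ℝ) (d : Fin n → ℝ)
        (z : Fin n → Fin m → ℝ),
        0 ≤ t ∧ (∀ i : Fin n, 0 ≤ v i) ∧
        (∀ (i : Fin n) (j : Fin m),
          x j * (1 - bR (p i j)) + bR (p i j) * (1 - x j) ≤ z i j) ∧
        (∀ i : Fin n, ∑ j : Fin m, z i j ≤ d i) ∧
        (∀ i : Fin n, d i - t ≤ v i) ∧
        c = k * t + ∑ i : Fin n, v i} D ∧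
    IsLeast {c : ℝ | ∃ (u : Fin n → ℝ) (v : Fin k → ℝ) (d : Fin n → ℝ)
        (z : Fin n → Fin m → ℝ),
        (∀ i : Fin n, 0 ≤ u i) ∧ (∀ h : Fin k, 0 ≤ v h) ∧
        (∀ (i : Fin n) (j : Fin m),
          x j * (1 - bR (p i j)) + bR (p i j) * (1 - x j) ≤ z i j) ∧
        (∀ i : Fin n, ∑ j : Fin m, z i j ≤ d i) ∧
        (∀ (i : Fin n) (h : Fin k), d i ≤ u i + v h) ∧
        c = ∑ i : Fin n, u i + ∑ h : Fin k, v h} D := by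
  classical
  set c : Fin n → ℝ := fun i => ∑ j : Fin m, |bR (p i j) - x j| with hc
  have hc0 : ∀ i, 0 ≤ c i := fun i => Finset.sum_nonneg fun j _ => abs_nonneg _
  obtain ⟨S, hScard, hSsum⟩ := hD.1
  have hSne : S.Nonempty := Finset.card_pos.mp (hScard ▸ hk1)
  obtain ⟨i₀, hi₀S, hi₀min⟩ := S.exists_min_image c hSne
  set t : ℝ := c i₀ with ht
  have ht0 : 0 ≤ t := hc0 i₀
  -- every element outside S has value ≤ t
  have hout : ∀ i, i ∉ S → c i ≤ t := by
    intro i hiS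
    by_contra h
    push_neg at h
    have hiE : i ∉ S.erase i₀ := fun h' => hiS (Finset.mem_of_mem_erase h')
    have hcard : (insert i (S.erase i₀)).card = k := by
      rw [Finset.card_insert_of_notMem hiE, Finset.card_erase_of_mem hi₀S, hScard]
      omega
    have hsum : ∑ j ∈ insert i (S.erase i₀), c j = c i + (∑ j ∈ S, c j - c i₀) := by
      rw [Finset.sum_insert hiE]
      have := Finset.add_sum_erase S c hi₀S
      linarith
    have hle : ∑ j ∈ insert i (S.erase i₀), c j ≤ D := hD.2 ⟨_, hcard, rfl⟩
    rw [hsum, hSsum] at hle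
    linarith
  have hin : ∀ i ∈ S, t ≤ c i := hi₀min
  -- the v-vector
  set v : Fin n → ℝ := fun i => max (c i - t) 0 with hv
  have hv0 : ∀ i, 0 ≤ v i := fun i => le_max_right _ _
  have hvsum : ∑ i : Fin n, v i = ∑ i ∈ S, (c i - t) := by
    rw [← Finset.sum_subset (Finset.subset_univ S)
      (fun i _ hiS => max_eq_right (by linarith [hout i hiS]))]
    exact Finset.sum_congr rfl fun i hi => max_eq_left (by linarith [hin i hi])
  have hktv : (k : ℝ) * t + ∑ i : Fin n, v i = D := by
    rw [hvsum, Finset.sum_sub_distrib, Finset.sum_const, hScard, hSsum]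
    push_cast; ring
  refine ⟨⟨⟨fun i j => |bR (p i j) - x j|,
      fun i j => bR_abs1 (x j) _, fun i j => bR_abs2 (x j) _, ?_⟩, ?_⟩,
    ⟨⟨t, v, c, fun i j => |bR (p i j) - x j|, ht0, hv0,
      fun i j => (bR_abs (hx j) _).ge, fun i => le_rfl,
      fun i => le_max_left (c i - t) 0, hktv.symm⟩, ?_⟩,
    ⟨⟨v, fun _ => t, c, fun i j => |bR (p i j) - x j|, hv0, fun _ => ht0,
      fun i j => (bR_abs (hx j) _).ge, fun i => le_rfl,
      fun i h => by have := le_max_left (c i - t) 0; simp only [hv]; linarith, ?_⟩, ?_⟩⟩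
  · -- (i) D is an upper bound on Σ_j Σ_{i∈S'} |…|
    intro S' hS'
    rw [Finset.sum_comm]
    exact hD.2 ⟨S', hS', rfl⟩
  · -- (i) lower bound
    rintro w ⟨z, hz1, hz2, hz3⟩
    have h1 : D ≤ ∑ j : Fin m, ∑ i ∈ S, z i j := by
      rw [Finset.sum_comm, ← hSsum]
      refine Finset.sum_le_sum fun i _ => Finset.sum_le_sum fun j _ => ?_
      rw [bR_abs (hx j)]
      have h1 := hz1 i j
      have h2 := hz2 i j
      cases hb : p i j <;> rw [hb] at h1 h2 <;> simp [bR] at h1 h2 ⊢ <;> linarith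
    exact h1.trans (hz3 S hScard)
  · -- (ii) lower bound
    rintro w ⟨t', v', d', z', ht', hv', hz', hd', hvd', rfl⟩
    have hci : ∀ i, c i ≤ d' i := fun i =>
      le_trans (Finset.sum_le_sum fun j _ => (bR_abs (hx j) _).le.trans (hz' i j)) (hd' i)
    have : D ≤ ∑ i ∈ S, (v' i + t') := by
      rw [← hSsum]
      exact Finset.sum_le_sum fun i _ => (hci i).trans (by linarith [hvd' i])
    rw [Finset.sum_add_distrib, Finset.sum_const, hScard, nsmul_eq_mul] at this
    have hle : ∑ i ∈ S, v' i ≤ ∑ i : Fin n, v' i :=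
      Finset.sum_le_sum_of_subset_of_nonneg (Finset.subset_univ S) fun i _ _ => hv' i
    push_cast at this ⊢
    linarith
  · -- (iii) value equality
    simp only [Finset.sum_const, Finset.card_univ, Fintype.card_fin, nsmul_eq_mul]
    linarith [hktv]
  · -- (iii) lower bound
    rintro w ⟨u', v', d', z', hu', hv', hz', hd', hud', rfl⟩
    have hci : ∀ i, c i ≤ d' i := fun i =>
      le_trans (Finset.sum_le_sum fun j _ => (bR_abs (hx j) _).le.trans (hz' i j)) (hd' i)
    have e : S ≃ Fin k := S.equivFinOfCardEq hScard
    have hDle : D ≤ ∑ a ∈ S.attach, (u' a + v' (e a)) := by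
      rw [← hSsum, ← Finset.sum_attach S (fun i => ∑ j : Fin m, |bR (p i j) - x j|)]
      exact Finset.sum_le_sum fun a _ => (hci a).trans (hud' a (e a))
    rw [Finset.sum_add_distrib] at hDle
    have h1 : ∑ a ∈ S.attach, u' (↑a) ≤ ∑ i : Fin n, u' i := by
      rw [Finset.sum_attach S (fun i => u' i)]
      exact Finset.sum_le_sum_of_subset_of_nonneg (Finset.subset_univ S) fun i _ _ => hu' i
    have h2 : ∑ a ∈ S.attach, v' (e a) = ∑ h : Fin k, v' h := by
      rw [← Equiv.sum_comp e v']
      rfl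
    linarith
end

section
/- For every 1 ≤ k < n, the optimal values of the k-sum and (k+1)-sum approval voting problems satisfy (k+1)·z(k) ≥ k·z(k+1); equivalently, z(k) ≥ (k/(k+1))·z(k+1). -/
/-- For every `1 ≤ k < n`, `(k+1)·z(k) ≥ k·z(k+1)`, i.e.
`z(k) ≥ (k/(k+1))·z(k+1)`. -/
theorem zk_lower_bound {n m k : ℕ} (hk1 : 1 ≤ k) (hkn : k < n)
    (p : Fin n → Fin m → Bool) :
    k * zk p (k + 1) ≤ (k + 1) * zk p k := by
  -- key: for any x and any S of card k+1, k * ∑_{i∈S} d_i ≤ (k+1) * Dk p k x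
  have key : ∀ (x : Fin m → Bool) (S : Finset (Fin n)), S.card = k + 1 →
      k * ∑ i ∈ S, dHam p x i ≤ (k + 1) * Dk p k x := by
    intro x S hS
    set T := ∑ i ∈ S, dHam p x i with hT
    have h1 : ∀ j ∈ S, ∑ i ∈ S.erase j, dHam p x i ≤ Dk p k x := by
      intro j hj
      rw [Dk]
      refine Finset.le_sup (f := fun S => ∑ i ∈ S, dHam p x i) ?_
      rw [Finset.mem_powersetCard]
      exact ⟨Finset.subset_univ _, by rw [Finset.card_erase_of_mem hj, hS]; omega⟩
    have h2 : ∑ j ∈ S, (∑ i ∈ S.erase j, dHam p x i + dHam p x j) = (k + 1) * T := by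
      rw [Finset.sum_congr rfl fun j hj => Finset.sum_erase_add S _ hj,
        Finset.sum_const, hS, smul_eq_mul]
    rw [Finset.sum_add_distrib, ← hT, add_mul, one_mul] at h2
    have h3 : ∑ j ∈ S, ∑ i ∈ S.erase j, dHam p x i = k * T := by omega
    calc k * T = ∑ j ∈ S, ∑ i ∈ S.erase j, dHam p x i := h3.symm
      _ ≤ ∑ j ∈ S, Dk p k x := Finset.sum_le_sum h1
      _ = (k + 1) * Dk p k x := by rw [Finset.sum_const, hS, smul_eq_mul]
  obtain ⟨x, -, hx⟩ := Finset.exists_mem_eq_inf' (Finset.univ_nonempty)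
    (Dk p k (n := n) (m := m))
  have hz1 : zk p (k + 1) ≤ Dk p (k + 1) x := Finset.inf'_le _ (Finset.mem_univ x)
  -- Dk p (k+1) x is attained at some S
  have hne : (Finset.powersetCard (k + 1) (Finset.univ : Finset (Fin n))).Nonempty := by
    obtain ⟨t, ht, htc⟩ := Finset.exists_subset_card_eq
      (s := (Finset.univ : Finset (Fin n))) (n := k + 1)
      (by simpa using hkn)
    exact ⟨t, Finset.mem_powersetCard.2 ⟨ht, htc⟩⟩
  obtain ⟨S, hSmem, hSeq⟩ := Finset.exists_mem_eq_sup _ hne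
    (fun S => ∑ i ∈ S, dHam p x i)
  have hScard := (Finset.mem_powersetCard.1 hSmem).2
  calc k * zk p (k + 1) ≤ k * Dk p (k + 1) x := Nat.mul_le_mul_left k hz1
    _ = k * ∑ i ∈ S, dHam p x i := by rw [Dk, hSeq]
    _ ≤ (k + 1) * Dk p k x := key x S hScard
    _ = (k + 1) * zk p k := by rw [← hx, zk]
end

section
/- Fix 1 ≤ k ≤ n and a candidate j0 ∈ Fin m with γ_{j0} ≥ n − ⌊k/2⌋. Then for every committee x : Fin m → Bool, D_k(Function.update x j0 true) ≤ D_k(x). In particular, there exists an optimal solution of the k-sum approval voting problem in which candidate j0 is elected. -/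
/-- If `γ_{j0} ≥ n − ⌊k/2⌋`, then electing `j0` never increases the
`k`-sum score, and hence some optimal `k`-sum committee elects `j0`. -/
theorem fix_variable_to_one {n m k : ℕ} (hk1 : 1 ≤ k) (hkn : k ≤ n)
    (p : Fin n → Fin m → Bool) (j0 : Fin m) (hj0 : n - k / 2 ≤ gamma p j0) :
    (∀ x : Fin m → Bool, Dk p k (Function.update x j0 true) ≤ Dk p k x) ∧
    (∃ xstar : Fin m → Bool, xstar j0 = true ∧
      ∀ x : Fin m → Bool, Dk p k xstar ≤ Dk p k x) := by
  have main : ∀ x : Fin m → Bool, Dk p k (Function.update x j0 true) ≤ Dk p k x := by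
    intro x
    by_cases hx : x j0 = true
    · have : Function.update x j0 true = x := by
        rw [← hx]; exact Function.update_eq_self j0 x
      rw [this]
    · simp only [Bool.not_eq_true] at hx
      set x' := Function.update x j0 true with hx'
      apply Finset.sup_le
      intro S hS
      have hScard : S.card = k := (Finset.mem_powersetCard_univ.mp hS)
      have key : ∀ i, dHam p x' i + (if p i j0 ≠ x j0 then 1 else 0)
          = dHam p x i + (if p i j0 ≠ true then 1 else 0) := by
        intro i
        unfold dHam
        rw [Finset.card_filter, Finset.card_filter,
            ← Finset.add_sum_erase _ _ (Finset.mem_univ j0),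
            ← Finset.add_sum_erase _ _ (Finset.mem_univ j0)]
        have hxj0 : x' j0 = true := Function.update_self _ _ _
        have hrest : ∀ j ∈ Finset.univ.erase j0,
            (if p i j ≠ x' j then 1 else 0) = (if p i j ≠ x j then 1 else 0 : ℕ) := by
          intro j hj
          have : x' j = x j := Function.update_of_ne (Finset.mem_erase.mp hj).1 _ _
          rw [this]
        rw [Finset.sum_congr rfl hrest, hxj0]
        ring
      have hsum : (∑ i ∈ S, dHam p x' i) + ∑ i ∈ S, (if p i j0 ≠ x j0 then 1 else 0)
          = (∑ i ∈ S, dHam p x i) + ∑ i ∈ S, (if p i j0 ≠ true then 1 else 0) := by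
        rw [← Finset.sum_add_distrib, ← Finset.sum_add_distrib]
        exact Finset.sum_congr rfl fun i _ => key i
      have ht : ∑ i ∈ S, (if p i j0 ≠ x j0 then 1 else 0)
          = (S.filter fun i => p i j0 = true).card := by
        rw [Finset.card_filter]
        refine Finset.sum_congr rfl fun i _ => ?_
        simp [hx]
      have hf : ∑ i ∈ S, (if p i j0 ≠ true then 1 else 0)
          = (S.filter fun i => ¬ p i j0 = true).card := by
        rw [Finset.card_filter]
      have htf : (S.filter fun i => p i j0 = true).card
          + (S.filter fun i => ¬ p i j0 = true).card = k := by
        rw [Finset.card_filter_add_card_filter_not, hScard]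
      have hfu : (S.filter fun i => ¬ p i j0 = true).card
          ≤ (Finset.univ.filter fun i => ¬ p i j0 = true).card :=
        Finset.card_le_card (Finset.filter_subset_filter _ (Finset.subset_univ S))
      have hun : gamma p j0 + (Finset.univ.filter fun i => ¬ p i j0 = true).card = n := by
        unfold gamma
        rw [Finset.card_filter_add_card_filter_not, Finset.card_univ, Fintype.card_fin]
      have hle : (∑ i ∈ S, dHam p x' i) ≤ ∑ i ∈ S, dHam p x i := by
        rw [ht, hf] at hsum
        omega
      exact le_trans hle (Finset.le_sup (f := fun S => ∑ i ∈ S, dHam p x i) hS)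
  obtain ⟨y, -, hy⟩ := Finset.exists_min_image (Finset.univ : Finset (Fin m → Bool))
    (Dk p k) ⟨fun _ => true, Finset.mem_univ _⟩
  exact ⟨main, Function.update y j0 true, Function.update_self _ _ _,
    fun z => le_trans (main y) (hy z (Finset.mem_univ z))⟩
end

section
/- Fix 1 ≤ k ≤ n and a candidate j0 ∈ Fin m with γ_{j0} ≤ ⌊k/2⌋. Then for every committee x : Fin m → Bool, D_k(Function.update x j0 false) ≤ D_k(x). In particular, there exists an optimal solution of the k-sum approval voting problem in which candidate j0 is not elected. -/
lemma dHam_sum {n m : ℕ} (p : Fin n → Fin m → Bool) (x : Fin m → Bool) (i : Fin n) :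
    dHam p x i = ∑ j, if p i j ≠ x j then 1 else 0 := by
  simp [dHam, Finset.card_filter]

lemma dHam_update {n m : ℕ} (p : Fin n → Fin m → Bool) (x : Fin m → Bool) (j0 : Fin m)
    (hx : x j0 = true) (i : Fin n) :
    dHam p (Function.update x j0 false) i + (if p i j0 = false then 1 else 0)
      = dHam p x i + (if p i j0 = true then 1 else 0) := by
  rw [dHam_sum, dHam_sum, ← Finset.add_sum_erase _ _ (Finset.mem_univ j0),
    ← Finset.add_sum_erase _ _ (Finset.mem_univ j0)]
  have hs : ∑ j ∈ Finset.univ.erase j0, (if p i j ≠ Function.update x j0 false j then 1 else 0)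
      = ∑ j ∈ Finset.univ.erase j0, (if p i j ≠ x j then 1 else 0) := by
    refine Finset.sum_congr rfl fun j hj => ?_
    rw [Function.update_of_ne (Finset.mem_erase.1 hj).1]
  rw [hs, Function.update_self, hx]
  cases h : p i j0 <;> simp [h] <;> ring

/-- If `γ_{j0} ≤ ⌊k/2⌋`, then removing `j0` from the committee
never increases the `k`-sum score, and hence some optimal `k`-sum committee
does not elect `j0`. -/
theorem fix_variable_to_zero {n m k : ℕ} (hk1 : 1 ≤ k) (hkn : k ≤ n)
    (p : Fin n → Fin m → Bool) (j0 : Fin m) (hj0 : gamma p j0 ≤ k / 2) :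
    (∀ x : Fin m → Bool, Dk p k (Function.update x j0 false) ≤ Dk p k x) ∧
    (∃ xstar : Fin m → Bool, xstar j0 = false ∧
      ∀ x : Fin m → Bool, Dk p k xstar ≤ Dk p k x) := by
  have main : ∀ x : Fin m → Bool, Dk p k (Function.update x j0 false) ≤ Dk p k x := by
    intro x
    cases hx : x j0 with
    | false =>
        have : Function.update x j0 false = x := by
          funext j; by_cases h : j = j0 <;> simp [Function.update, h, hx]
        rw [this]
    | true =>
        apply Finset.sup_le
        intro S hS
        rw [Finset.mem_powersetCard] at hS
        -- per-set inequality
        have key : (∑ i ∈ S, dHam p (Function.update x j0 false) i) ≤ ∑ i ∈ S, dHam p x i := by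
          have hsum : (∑ i ∈ S, dHam p (Function.update x j0 false) i)
                + (S.filter fun i => p i j0 = false).card
              = (∑ i ∈ S, dHam p x i) + (S.filter fun i => p i j0 = true).card := by
            rw [Finset.card_filter, Finset.card_filter, ← Finset.sum_add_distrib,
              ← Finset.sum_add_distrib]
            exact Finset.sum_congr rfl fun i _ => dHam_update p x j0 hx i
          have ha : (S.filter fun i => p i j0 = true).card ≤ gamma p j0 :=
            Finset.card_le_card (by
              intro i hi
              rw [Finset.mem_filter] at hi ⊢
              exact ⟨Finset.mem_univ _, hi.2⟩)
          have hab : (S.filter fun i => p i j0 = true).card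
              + (S.filter fun i => p i j0 = false).card = k := by
            rw [← hS.2]
            rw [← Finset.card_filter_add_card_filter_not
              (s := S) (p := fun i => p i j0 = true)]
            have : (S.filter fun i => p i j0 = false)
                = S.filter fun i => ¬ p i j0 = true := by
              apply Finset.filter_congr; intro i _; simp
            rw [this]
          have h2 : (S.filter fun i => p i j0 = true).card ≤ k / 2 := le_trans ha hj0
          omega
        exact le_trans key (Finset.le_sup (f := fun S => ∑ i ∈ S, dHam p x i)
          (by rw [Finset.mem_powersetCard]; exact hS))
  refine ⟨main, ?_⟩
  obtain ⟨x, -, hx⟩ := Finset.exists_min_image (Finset.univ : Finset (Fin m → Bool))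
    (Dk p k) ⟨fun _ => false, Finset.mem_univ _⟩
  exact ⟨Function.update x j0 false, Function.update_self _ _ _,
    fun y => le_trans (main x) (hx y (Finset.mem_univ y))⟩
end
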